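/- Every nonempty finite word x over a linearly ordered alphabet admits a unique factorization x = u₁u₂⋯u_n into Lyndon words with u₁ ≥lex u₂ ≥lex ⋯ ≥lex u_n. -/

import Mathlib

/-- A finite word is a Lyndon word if it is nonempty and lexicographically
strictly smaller than all of its proper nonempty suffixes. -/
def IsLyndon {A : Type*} [LinearOrder A] (w : List A) : Prop :=
  w ≠ [] ∧ ∀ i : ℕ, 0 < i → i < w.length → w < w.drop i

section Helpers

variable {A : Type*} [LinearOrder A]

lemma lyndon_lt_append_cons (l t : List A) (a : A) : l < l ++ a :: t := by
  induction l with
  | nil => exact List.Lex.nil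
  | cons b l ih => exact List.Lex.cons ih

lemma lyndon_prefix_le {s t : List A} (h : s <+: t) : s ≤ t := by
  obtain ⟨r, rfl⟩ := h
  cases r with
  | nil => simp
  | cons a t => exact le_of_lt (lyndon_lt_append_cons ..)

lemma lyndon_lt_append_of_lt_not_prefix :
    ∀ {s t : List A}, List.Lex (· < ·) s t → ¬ s <+: t → ∀ p q : List A, s ++ p < t ++ q
  | _, _, .nil, hp, _, _ => absurd (List.nil_prefix) hp
  | _, _, .cons h, hp, p, q =>
      List.Lex.cons (lyndon_lt_append_of_lt_not_prefix h
        (fun hh => hp (List.cons_prefix_cons.2 ⟨rfl, hh⟩)) p q)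
  | _, _, .rel h, _, _, _ => List.Lex.rel h

lemma IsLyndon.lt_suffix {w s : List A} (h : IsLyndon w) (hs : s <:+ w) (hne : s ≠ [])
    (hlen : s.length < w.length) : w < s := by
  obtain ⟨c, rfl⟩ := hs
  have hd : (c ++ s).drop c.length = s := List.drop_left
  have hc : c ≠ [] := by
    rintro rfl
    simp at hlen
  have h0 : 0 < c.length := List.length_pos_iff.2 hc
  have h1 : c.length < (c ++ s).length := by
    have : 0 < s.length := List.length_pos_iff.2 hne
    simp only [List.length_append]; omega
  simpa [hd] using h.2 c.length h0 h1

lemma IsLyndon.append {u v : List A} (hu : IsLyndon u) (hv : IsLyndon v) (huv : u < v) :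
    IsLyndon (u ++ v) := by
  have hune : u ≠ [] := hu.1
  have hvne : v ≠ [] := hv.1
  have key : u ++ v < v := by
    by_cases hp : u <+: v
    · obtain ⟨w, rfl⟩ := hp
      have hw : w ≠ [] := by
        rintro rfl
        simp at huv
      have hvw : u ++ w < w := by
        refine hv.lt_suffix ⟨u, rfl⟩ hw ?_
        have : 0 < u.length := List.length_pos_iff.2 hune
        simp only [List.length_append]; omega
      exact List.Lex.append_left _ hvw u
    · have := lyndon_lt_append_of_lt_not_prefix huv hp v []
      simpa using this
  refine ⟨by simp [hune], fun i h0 hlen => ?_⟩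
  simp only [List.length_append] at hlen
  rcases lt_trichotomy i u.length with hi | hi | hi
  · rw [List.drop_append_of_le_length (le_of_lt hi)]
    have h1 : u < u.drop i := hu.2 i h0 hi
    have np : ¬ u <+: u.drop i := by
      intro hpp
      have := hpp.length_le
      simp only [List.length_drop] at this
      omega
    exact lyndon_lt_append_of_lt_not_prefix h1 np v v
  · subst hi
    rw [List.drop_left]
    exact key
  · have hdrop : (u ++ v).drop i = v.drop (i - u.length) := by
      have : i = u.length + (i - u.length) := by omega
      rw [this, List.drop_length_add_append]
      congr 1
      omega
    rw [hdrop]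
    have h2 : v < v.drop (i - u.length) := hv.2 (i - u.length) (by omega) (by omega)
    exact lt_trans key h2

lemma lyndon_singleton (a : A) : IsLyndon [a] :=
  ⟨List.cons_ne_nil a [], fun i h0 h1 => by simp at h1; omega⟩

lemma lyndon_flatten_map_singleton (x : List A) : (x.map (fun a => [a])).flatten = x := by
  induction x <;> simp [*]

lemma lyndon_exists_not_chain' {α : Type*} {r : α → α → Prop} :
    ∀ {L : List α}, ¬ L.Chain' r → ∃ l₁ a b l₂, L = l₁ ++ a :: b :: l₂ ∧ ¬ r a b := by
  intro L
  induction L with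
  | nil => intro h; exact absurd List.isChain_nil h
  | cons a t ih =>
    intro h
    cases t with
    | nil => exact absurd (List.isChain_singleton a) h
    | cons b t' =>
      rw [List.Chain', List.isChain_cons_cons] at h
      by_cases hab : r a b
      · have : ¬ (b :: t').Chain' r := fun hh => h ⟨hab, hh⟩
        obtain ⟨l₁, c, d, l₂, heq, hcd⟩ := ih this
        exact ⟨a :: l₁, c, d, l₂, by rw [heq]; rfl, hcd⟩
      · exact ⟨[], a, b, t', rfl, hab⟩

lemma lyndon_exists_chain :
    ∀ (n : ℕ) (L : List (List A)), L.length ≤ n → (∀ w ∈ L, IsLyndon w) →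
    ∃ L' : List (List A), L'.flatten = L.flatten ∧ (∀ w ∈ L', IsLyndon w) ∧
      L'.Chain' (fun a b => b ≤ a) := by
  intro n
  induction n with
  | zero =>
    intro L hlen _
    have : L = [] := List.eq_nil_of_length_eq_zero (Nat.le_zero.1 hlen)
    subst this
    exact ⟨[], rfl, by simp, List.isChain_nil⟩
  | succ n ih =>
    intro L hlen hly
    by_cases hc : L.Chain' (fun a b => b ≤ a)
    · exact ⟨L, rfl, hly, hc⟩
    · obtain ⟨l₁, a, b, l₂, heq, hab⟩ := lyndon_exists_not_chain' hc
      have hab' : a < b := not_le.1 hab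
      have ha : IsLyndon a := hly a (by rw [heq]; simp)
      have hb : IsLyndon b := hly b (by rw [heq]; simp)
      have hm : IsLyndon (a ++ b) := ha.append hb hab'
      have hlen' : (l₁ ++ (a ++ b) :: l₂).length ≤ n := by
        rw [heq] at hlen
        simp only [List.length_append, List.length_cons] at *
        omega
      have hly' : ∀ w ∈ l₁ ++ (a ++ b) :: l₂, IsLyndon w := by
        intro w hw
        simp only [List.mem_append, List.mem_cons] at hw
        rcases hw with hw | hw | hw
        · exact hly w (by rw [heq]; simp [hw])
        · subst hw; exact hm
        · exact hly w (by rw [heq]; simp [hw])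
      obtain ⟨L', h1, h2, h3⟩ := ih _ hlen' hly'
      refine ⟨L', ?_, h2, h3⟩
      rw [h1, heq]
      simp [List.flatten_append, List.append_assoc]

lemma lyndon_chain_mem_le {L : List (List A)} {u : List A}
    (h : (u :: L).Chain' (fun a b => b ≤ a)) : ∀ b ∈ L, b ≤ u := by
  induction L generalizing u with
  | nil => simp
  | cons c t ih =>
    rw [List.Chain', List.isChain_cons_cons] at h
    intro b hb
    rcases List.mem_cons.1 hb with rfl | hb
    · exact h.1
    · exact le_trans (ih h.2 b hb) h.1

lemma lyndon_suffix_append_cases {s a b : List A} (h : s <:+ a ++ b) :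
    s <:+ b ∨ ∃ s', s' <:+ a ∧ s' ≠ [] ∧ s = s' ++ b := by
  obtain ⟨c, hc⟩ := h
  have hs : s = (a ++ b).drop c.length := by rw [← hc, List.drop_left]
  by_cases hk : a.length ≤ c.length
  · left
    have : (a ++ b).drop c.length = b.drop (c.length - a.length) := by
      have : c.length = a.length + (c.length - a.length) := by omega
      rw [this, List.drop_length_add_append]
      congr 1
      omega
    rw [hs, this]
    exact List.drop_suffix _ _
  · right
    push_neg at hk
    refine ⟨a.drop c.length, List.drop_suffix _ _, ?_, ?_⟩
    · intro hnil
      have := congrArg List.length hnil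
      simp only [List.length_drop, List.length_nil] at this
      omega
    · rw [hs, List.drop_append_of_le_length (le_of_lt hk)]

lemma lyndon_getLast_min :
    ∀ (L : List (List A)) (hL : L ≠ []), (∀ w ∈ L, IsLyndon w) →
      L.Chain' (fun a b => b ≤ a) →
      ∀ s : List A, s <:+ L.flatten → s ≠ [] → L.getLast hL ≤ s := by
  intro L
  induction L with
  | nil => intro h; exact absurd rfl h
  | cons u L' ih =>
    intro hL hly hc s hs hsne
    cases L' with
    | nil =>
      simp only [List.getLast_singleton]
      simp only [List.flatten_cons, List.flatten_nil, List.append_nil] at hs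
      by_cases heq : s = u
      · exact le_of_eq (heq ▸ rfl)
      · have hlt : s.length < u.length := by
          rcases lt_or_eq_of_le hs.length_le with h | h
          · exact h
          · exact absurd (hs.eq_of_length h) heq
        exact le_of_lt ((hly u (by simp)).lt_suffix hs hsne hlt)
    | cons v t =>
      have hL' : (v :: t) ≠ [] := List.cons_ne_nil v t
      rw [List.getLast_cons hL']
      have hm_mem : (v :: t).getLast hL' ∈ v :: t := List.getLast_mem hL'
      have hmu : (v :: t).getLast hL' ≤ u := lyndon_chain_mem_le hc _ hm_mem
      simp only [List.flatten_cons] at hs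
      rcases lyndon_suffix_append_cases hs with h | ⟨s', hs', hs'ne, rfl⟩
      · exact ih hL' (fun w hw => hly w (List.mem_cons_of_mem u hw))
          (hc.tail) s h hsne
      · have hus' : u ≤ s' := by
          by_cases heq : s' = u
          · exact le_of_eq heq.symm
          · have hlt : s'.length < u.length := by
              rcases lt_or_eq_of_le hs'.length_le with h | h
              · exact h
              · exact absurd (hs'.eq_of_length h) heq
            exact le_of_lt ((hly u (by simp)).lt_suffix hs' hs'ne hlt)
        have : s' ≤ s' ++ (v :: t).flatten := lyndon_prefix_le ⟨_, rfl⟩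
        exact le_trans hmu (le_trans hus' this)

lemma lyndon_getLast_suffix (L : List (List A)) (hL : L ≠ []) :
    L.getLast hL <:+ L.flatten := by
  conv_rhs => rw [← List.dropLast_append_getLast hL]
  rw [List.flatten_append]
  simp

lemma lyndon_eq_nil_of_flatten_eq_nil {L : List (List A)} (hly : ∀ w ∈ L, IsLyndon w)
    (h : L.flatten = []) : L = [] := by
  cases L with
  | nil => rfl
  | cons u t =>
    rw [List.flatten_eq_nil_iff] at h
    exact absurd (h u (by simp)) (hly u (by simp)).1

lemma lyndon_uniq :
    ∀ (n : ℕ) (L M : List (List A)), L.flatten.length ≤ n → L.flatten = M.flatten →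
      (∀ w ∈ L, IsLyndon w) → (∀ w ∈ M, IsLyndon w) →
      L.Chain' (fun a b => b ≤ a) → M.Chain' (fun a b => b ≤ a) → L = M := by
  intro n
  induction n with
  | zero =>
    intro L M hlen heq hlyL hlyM _ _
    have hLnil : L.flatten = [] := List.eq_nil_of_length_eq_zero (Nat.le_zero.1 hlen)
    have h1 := lyndon_eq_nil_of_flatten_eq_nil hlyL hLnil
    have h2 := lyndon_eq_nil_of_flatten_eq_nil hlyM (heq ▸ hLnil)
    rw [h1, h2]
  | succ n ih =>
    intro L M hlen heq hlyL hlyM hcL hcM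
    by_cases hL : L = []
    · subst hL
      exact (lyndon_eq_nil_of_flatten_eq_nil hlyM heq.symm).symm
    by_cases hM : M = []
    · subst hM
      exact lyndon_eq_nil_of_flatten_eq_nil hlyL heq
    -- last factors are equal
    have hmLne : L.getLast hL ≠ [] := (hlyL _ (List.getLast_mem hL)).1
    have hmMne : M.getLast hM ≠ [] := (hlyM _ (List.getLast_mem hM)).1
    have h1 : L.getLast hL ≤ M.getLast hM :=
      lyndon_getLast_min L hL hlyL hcL _ (heq ▸ lyndon_getLast_suffix M hM) hmMne
    have h2 : M.getLast hM ≤ L.getLast hL :=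
      lyndon_getLast_min M hM hlyM hcM _ (heq ▸ lyndon_getLast_suffix L hL) hmLne
    have hml : L.getLast hL = M.getLast hM := le_antisymm h1 h2
    have hLd : L.dropLast ++ [L.getLast hL] = L := List.dropLast_append_getLast hL
    have hMd : M.dropLast ++ [M.getLast hM] = M := List.dropLast_append_getLast hM
    have hflat : L.dropLast.flatten = M.dropLast.flatten := by
      have e1 : L.dropLast.flatten ++ L.getLast hL = L.flatten := by
        conv_rhs => rw [← hLd]
        rw [List.flatten_append]; simp
      have e2 : M.dropLast.flatten ++ M.getLast hM = M.flatten := by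
        conv_rhs => rw [← hMd]
        rw [List.flatten_append]; simp
      apply List.append_cancel_right (bs := L.getLast hL)
      rw [e1, heq, ← e2, hml]
    have hlen' : L.dropLast.flatten.length ≤ n := by
      have e1 : L.dropLast.flatten ++ L.getLast hL = L.flatten := by
        conv_rhs => rw [← hLd]
        rw [List.flatten_append]; simp
      have := congrArg List.length e1
      simp only [List.length_append] at this
      have hpos : 0 < (L.getLast hL).length := List.length_pos_iff.2 hmLne
      omega
    have hIH : L.dropLast = M.dropLast :=
      ih L.dropLast M.dropLast hlen' hflat
        (fun w hw => hlyL w (List.mem_of_mem_dropLast hw))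
        (fun w hw => hlyM w (List.mem_of_mem_dropLast hw))
        (hcL.prefix (List.dropLast_prefix L))
        (hcM.prefix (List.dropLast_prefix M))
    rw [← hLd, ← hMd, hIH, hml]

end Helpers

theorem unique_lyndon_factorization {A : Type*} [LinearOrder A]
    (x : List A) (hx : x ≠ []) :
    ∃! L : List (List A),
      L.flatten = x ∧ (∀ w ∈ L, IsLyndon w) ∧ L.Chain' (fun a b => b ≤ a) := by
  obtain ⟨L, h1, h2, h3⟩ := lyndon_exists_chain (x.map (fun a => [a])).length
    (x.map (fun a => [a])) le_rfl (by
      intro w hw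
      simp only [List.mem_map] at hw
      obtain ⟨a, _, rfl⟩ := hw
      exact lyndon_singleton a)
  rw [lyndon_flatten_map_singleton] at h1
  refine ⟨L, ⟨h1, h2, h3⟩, ?_⟩
  rintro M ⟨hm1, hm2, hm3⟩
  exact lyndon_uniq x.length M L (by rw [hm1]) (by rw [hm1, h1]) hm2 h2 hm3 h3
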